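/- There exist a constant C > 0 and an integer N₀ such that for every integer N ≥ N₀ and all real numbers α, β, γ with 0 ≤ α ≤ 1/2, 0 ≤ β ≤ 1/2, and 0 ≤ γ ≤ 1/2, one has 1/(2N) − C/N² ≤ −∂L_N/∂γ (α, β, γ) ≤ 1/N + C/N². In particular, −∂L_N/∂γ = Θ(1/N) uniformly over this regime. -/

import Mathlib

set_option maxHeartbeats 1000000


noncomputable section

/-- `s = exp(β·e^α / (e^α + 2N − 2))`. -/
def sFun (N : ℕ) (α β : ℝ) : ℝ :=
  Real.exp (β * Real.exp α / (Real.exp α + 2 * (N : ℝ) - 2))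

/-- `r = s + 2N − 1`. -/
def rFun (N : ℕ) (α β : ℝ) : ℝ := sFun N α β + 2 * (N : ℝ) - 1

/-- The loss `L_N(α, β, γ) = γ²·(s² + 2N − 1)/r² − 2γ·s/r + 1`. -/
def Lfun (N : ℕ) (α β γ : ℝ) : ℝ :=
  γ ^ 2 * ((sFun N α β) ^ 2 + (2 * (N : ℝ) - 1)) / (rFun N α β) ^ 2 -
    2 * γ * sFun N α β / rFun N α β + 1

/-- The partial derivative `∂L_N/∂α`. -/
def dLalpha (N : ℕ) (α β γ : ℝ) : ℝ := deriv (fun x => Lfun N x β γ) α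

/-- The partial derivative `∂L_N/∂β`. -/
def dLbeta (N : ℕ) (α β γ : ℝ) : ℝ := deriv (fun x => Lfun N α x γ) β

/-- The partial derivative `∂L_N/∂γ`. -/
def dLgamma (N : ℕ) (α β γ : ℝ) : ℝ := deriv (fun x => Lfun N α β x) γ

lemma dLgamma_eq (N : ℕ) (α β γ : ℝ) :
    dLgamma N α β γ =
      2 * γ * ((sFun N α β) ^ 2 + (2 * (N : ℝ) - 1)) / (rFun N α β) ^ 2 -
        2 * (sFun N α β) / (rFun N α β) := by
  unfold dLgamma Lfun
  have h1 : HasDerivAt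
      (fun x : ℝ => x ^ 2 * ((sFun N α β) ^ 2 + (2 * (N : ℝ) - 1)) / (rFun N α β) ^ 2)
      (2 * γ * ((sFun N α β) ^ 2 + (2 * (N : ℝ) - 1)) / (rFun N α β) ^ 2) γ := by
    have := ((hasDerivAt_pow 2 γ).mul_const
      ((sFun N α β) ^ 2 + (2 * (N : ℝ) - 1))).div_const ((rFun N α β) ^ 2)
    refine this.congr_deriv ?_
    ring
  have h2 : HasDerivAt (fun x : ℝ => 2 * x * sFun N α β / rFun N α β)
      (2 * sFun N α β / rFun N α β) γ := by
    have := (((hasDerivAt_id γ).const_mul (2:ℝ)).mul_const (sFun N α β)).div_const (rFun N α β)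
    refine this.congr_deriv ?_
    ring
  exact ((h1.sub h2).add_const 1).deriv

/-- For all sufficiently large `N`, in the regime `0 ≤ α, β, γ ≤ 1/2`,
`1/(2N) − C/N² ≤ −∂L_N/∂γ ≤ 1/N + C/N²`; in particular `−∂L_N/∂γ = Θ(1/N)`
uniformly over this regime. -/
theorem stmt13 :
    ∃ C : ℝ, 0 < C ∧ ∃ N₀ : ℕ, ∀ N : ℕ, N₀ ≤ N → ∀ α β γ : ℝ,
      0 ≤ α → α ≤ 1 / 2 → 0 ≤ β → β ≤ 1 / 2 → 0 ≤ γ → γ ≤ 1 / 2 →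
        1 / (2 * (N : ℝ)) - C / (N : ℝ) ^ 2 ≤ -dLgamma N α β γ ∧
          -dLgamma N α β γ ≤ 1 / (N : ℝ) + C / (N : ℝ) ^ 2 := by
  refine ⟨2, by norm_num, 5, ?_⟩
  intro N hN α β γ hα0 hα1 hβ0 hβ1 hγ0 hγ1
  have hN5 : (5:ℝ) ≤ (N:ℝ) := by exact_mod_cast hN
  have hNpos : (0:ℝ) < (N:ℝ) := by linarith
  have hea1 : (1:ℝ) ≤ Real.exp α := Real.one_le_exp hα0
  have hea2 : Real.exp α ≤ 2 := by
    have h1 : Real.exp α ≤ Real.exp (1/2) := Real.exp_le_exp.mpr hα1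
    have h2 : Real.exp (1/2) * Real.exp (1/2) = Real.exp 1 := by
      rw [← Real.exp_add]; norm_num
    have h3 := Real.exp_one_lt_d9
    nlinarith [Real.exp_pos (1/2 : ℝ)]
  have hden : (0:ℝ) < Real.exp α + 2 * (N:ℝ) - 2 := by nlinarith
  set x : ℝ := β * Real.exp α / (Real.exp α + 2 * (N:ℝ) - 2) with hxdef
  have hx0 : 0 ≤ x := div_nonneg (mul_nonneg hβ0 (Real.exp_pos α).le) hden.le
  have hxN : 2 * x * (N:ℝ) ≤ 1 := by
    have heq : 2 * (β * Real.exp α / (Real.exp α + 2 * (N:ℝ) - 2)) * (N:ℝ)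
        = (2 * β * Real.exp α * (N:ℝ)) / (Real.exp α + 2 * (N:ℝ) - 2) := by ring
    rw [hxdef, heq, div_le_one hden]
    nlinarith [mul_nonneg (sub_nonneg.mpr hβ1)
      (mul_nonneg (Real.exp_pos α).le hNpos.le),
      mul_nonneg (sub_nonneg.mpr hea2) (by linarith : (0:ℝ) ≤ (N:ℝ) - 1)]
  have hxhalf : x ≤ 1/2 := by nlinarith
  set s : ℝ := sFun N α β with hsdef
  set r : ℝ := rFun N α β with hrdef
  have hr : r = s + 2 * (N:ℝ) - 1 := rfl
  have hse : s = Real.exp x := rfl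
  have hkey : -dLgamma N α β γ =
      (2 * s * r - 2 * γ * (s ^ 2 + (2 * (N:ℝ) - 1))) / r ^ 2 := by
    rw [dLgamma_eq, ← hsdef, ← hrdef]
    have hrne : r ≠ 0 := by
      have : (0:ℝ) < r := by
        rw [hr, hse]; nlinarith [Real.exp_pos x]
      exact this.ne'
    field_simp
    ring
  clear_value r s x
  have hs1 : 1 ≤ s := by rw [hse]; exact Real.one_le_exp hx0
  have hs2 : s ≤ 1 + 2 * x := by
    have hinv : Real.exp x * Real.exp (-x) = 1 := by
      rw [← Real.exp_add]; simp
    have hlow : (1:ℝ) - x ≤ Real.exp (-x) := by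
      have := Real.add_one_le_exp (-x); linarith
    have hpos := Real.exp_pos x
    have hmul : Real.exp x * (1 - x) ≤ 1 := by
      nlinarith [mul_le_mul_of_nonneg_left hlow hpos.le]
    rw [hse]
    nlinarith
  have hsN : (N:ℝ) * s ≤ (N:ℝ) + 1 := by
    nlinarith [mul_le_mul_of_nonneg_left hs2 hNpos.le]
  have hr0 : (0:ℝ) < r := by nlinarith
  have hrlow : 2 * (N:ℝ) ≤ r := by nlinarith
  have hrhigh : r ≤ 2 * (N:ℝ) + 1 := by nlinarith
  have hA0 : (0:ℝ) ≤ s ^ 2 + (2 * (N:ℝ) - 1) := by nlinarith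
  constructor
  · rw [hkey]
    have hlhs : 1 / (2 * (N:ℝ)) - 2 / (N:ℝ) ^ 2 = ((N:ℝ) - 4) / (2 * (N:ℝ) ^ 2) := by
      field_simp; ring
    rw [hlhs, div_le_div_iff₀ (by positivity) (by positivity)]
    have hX : 2 * (N:ℝ) ≤ 2 * s * r - 2 * γ * (s ^ 2 + (2 * (N:ℝ) - 1)) := by
      have h1 : (0:ℝ) ≤ (1 - 2 * γ) * (s ^ 2 + (2 * (N:ℝ) - 1)) :=
        mul_nonneg (by linarith) hA0
      nlinarith [sq_nonneg (s - 1), mul_nonneg (sub_nonneg.mpr hs1) hNpos.le]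
    have hr2 : r ^ 2 ≤ (2 * (N:ℝ) + 1) ^ 2 := by nlinarith
    nlinarith [mul_nonneg (by linarith : (0:ℝ) ≤ (N:ℝ) - 4) (sub_nonneg.mpr hr2),
      mul_nonneg (sub_nonneg.mpr hX) (by positivity : (0:ℝ) ≤ 2 * (N:ℝ) ^ 2)]
  · rw [hkey]
    have hrhs : 1 / (N:ℝ) + 2 / (N:ℝ) ^ 2 = ((N:ℝ) + 2) / (N:ℝ) ^ 2 := by
      field_simp
    rw [hrhs, div_le_div_iff₀ (by positivity) (by positivity)]
    have hc : 2 * s * (N:ℝ) ^ 2 ≤ ((N:ℝ) + 2) * r := by nlinarith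
    nlinarith [mul_le_mul_of_nonneg_right hc hr0.le,
      mul_nonneg (mul_nonneg (mul_nonneg (by norm_num : (0:ℝ) ≤ 2) hγ0) hA0) (sq_nonneg (N:ℝ))]
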